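/- For all n ≥ 4, there are no Dumont permutations of the fourth kind of length 2n avoiding the pattern 1234. -/

import Mathlib

/-- `π` contains the pattern `q` (a length-`k` sequence of distinct values given
as a function `Fin k → Fin k`) if some subsequence of `π` is order-isomorphic to `q`. -/
def PatternContains {n k : ℕ} (π : Equiv.Perm (Fin n)) (q : Fin k → Fin k) : Prop :=
  ∃ f : Fin k → Fin n, StrictMono f ∧ ∀ a b : Fin k, q a < q b ↔ π (f a) < π (f b)

/-- `π` avoids the pattern `q`. -/
def Avoids {n k : ℕ} (π : Equiv.Perm (Fin n)) (q : Fin k → Fin k) : Prop :=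
  ¬ PatternContains π q

/-- A Dumont permutation of the fourth kind of size `2n` (0-based indexing:
position `i` and value `π i` correspond to 1-based position `i+1` and value `π i + 1`):
every deficiency occurs at an even (1-based) position and has an even (1-based) value. -/
def IsDumont4 (n : ℕ) (π : Equiv.Perm (Fin (2 * n))) : Prop :=
  ∀ i : Fin (2 * n), (π i : ℕ) < (i : ℕ) → Even ((i : ℕ) + 1) ∧ Even ((π i : ℕ) + 1)

def p1234 : Fin 4 → Fin 4 := ![0, 1, 2, 3]
def p1342 : Fin 4 → Fin 4 := ![0, 2, 3, 1]
def p1432 : Fin 4 → Fin 4 := ![0, 3, 2, 1]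
def p1324 : Fin 4 → Fin 4 := ![0, 2, 1, 3]
def p1243 : Fin 4 → Fin 4 := ![0, 1, 3, 2]
def p1423 : Fin 4 → Fin 4 := ![0, 3, 1, 2]
def p231 : Fin 3 → Fin 3 := ![1, 2, 0]
def p321 : Fin 3 → Fin 3 := ![2, 1, 0]
def p213 : Fin 3 → Fin 3 := ![1, 0, 2]
def p312 : Fin 3 → Fin 3 := ![2, 0, 1]

lemma aux_quad {N : ℕ} (π : Equiv.Perm (Fin N)) (i j k l : Fin N)
    (hij : (i:ℕ) < j) (hjk : (j:ℕ) < k) (hkl : (k:ℕ) < l)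
    (h1 : (π i:ℕ) < π j) (h2 : (π j:ℕ) < π k) (h3 : (π k:ℕ) < π l) :
    PatternContains π p1234 := by
  set f : Fin 4 → Fin N :=
    fun a => if (a:ℕ) = 0 then i else if (a:ℕ) = 1 then j else if (a:ℕ) = 2 then k else l with hf
  have hmono : StrictMono f := by
    intro a b hab
    rw [Fin.lt_def] at hab ⊢
    fin_cases a <;> fin_cases b <;> simp [hf, show ((0:Fin 4):ℕ) = 0 from rfl,
      show ((1:Fin 4):ℕ) = 1 from rfl, show ((2:Fin 4):ℕ) = 2 from rfl,
      show ((3:Fin 4):ℕ) = 3 from rfl] at hab ⊢ <;> omega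
  have hpf : StrictMono (fun a => π (f a)) := by
    intro a b hab
    rw [Fin.lt_def] at hab ⊢
    fin_cases a <;> fin_cases b <;> simp [hf, show ((0:Fin 4):ℕ) = 0 from rfl,
      show ((1:Fin 4):ℕ) = 1 from rfl, show ((2:Fin 4):ℕ) = 2 from rfl,
      show ((3:Fin 4):ℕ) = 3 from rfl] at hab ⊢ <;> omega
  refine ⟨f, hmono, fun a b => ?_⟩
  have hq : p1234 a < p1234 b ↔ a < b := by
    fin_cases a <;> fin_cases b <;> simp [p1234]
  rw [hq, hpf.lt_iff_lt]


set_option maxHeartbeats 1000000 in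
/-- For all n ≥ 4, there are no Dumont-4 permutations of length 2n avoiding 1234. -/
theorem stmt_0 (n : ℕ) (hn : 4 ≤ n) :
    ¬ ∃ π : Equiv.Perm (Fin (2 * n)), IsDumont4 n π ∧ Avoids π p1234 := by

  rintro ⟨π, hD, hA⟩
  have hN : 8 ≤ 2 * n := by omega
  have hQ : ∀ i j k l : Fin (2*n), (i:ℕ) < j → (j:ℕ) < k → (k:ℕ) < l →
      (π i:ℕ) < π j → (π j:ℕ) < π k → (π k:ℕ) < π l → False := by
    intro i j k l a b c d e f
    exact hA (aux_quad π i j k l a b c d e f)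
  have hexc : ∀ i : Fin (2 * n), Even (i : ℕ) ∨ Even ((π i : ℕ)) → (i : ℕ) ≤ (π i : ℕ) := by
    intro i h
    by_contra hlt
    push_neg at hlt
    obtain ⟨h1, h2⟩ := hD i hlt
    rcases h with h | h
    · exact (Nat.even_add_one.mp h1) h
    · exact (Nat.even_add_one.mp h2) h
  have hinj : ∀ i j : Fin (2*n), (π i : ℕ) = (π j : ℕ) → (i:ℕ) = (j:ℕ) := by
    intro i j h
    exact congrArg Fin.val (π.injective (Fin.ext h))
  -- Step 1 : π 0 = 0
  have hpre : ∀ v : ℕ, v < 2*n → ∃ a : Fin (2*n), (π a : ℕ) = v := by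
    intro v hv
    exact ⟨π.symm ⟨v, hv⟩, by simp⟩
  have h0 : (π ⟨0, by omega⟩ : ℕ) = 0 := by
    obtain ⟨i0, hv0⟩ := hpre 0 (by omega)
    have hle : (i0 : ℕ) ≤ 0 := by
      have := hexc i0 (Or.inr (by rw [hv0]; decide))
      omega
    have : i0 = ⟨0, by omega⟩ := Fin.ext (show (i0 : ℕ) = 0 by omega)
    rw [← this]; exact hv0
  -- preimages of 2, 4, 6
  obtain ⟨a2, hv2⟩ := hpre 2 (by omega)
  obtain ⟨a4, hv4⟩ := hpre 4 (by omega)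
  obtain ⟨a6, hv6⟩ := hpre 6 (by omega)
  have hb2 : (a2 : ℕ) ≤ 2 := by
    have := hexc a2 (Or.inr (by rw [hv2]; decide)); omega
  have hb4 : (a4 : ℕ) ≤ 4 := by
    have := hexc a4 (Or.inr (by rw [hv4]; decide)); omega
  have hb6 : (a6 : ℕ) ≤ 6 := by
    have := hexc a6 (Or.inr (by rw [hv6]; decide)); omega
  have hz : ∀ i : Fin (2*n), (π i : ℕ) ≠ 0 → 0 < (i : ℕ) := by
    intro i hv
    rcases Nat.eq_zero_or_pos (i : ℕ) with h | h
    · exfalso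
      have : i = ⟨0, by omega⟩ := Fin.ext h
      rw [this] at hv; exact hv h0
    · exact h
  have ha2z : 0 < (a2 : ℕ) := hz a2 (by omega)
  have ha4z : 0 < (a4 : ℕ) := hz a4 (by omega)
  have ha6z : 0 < (a6 : ℕ) := hz a6 (by omega)
  have hlast : (2*n - 2 : ℕ) ≤ (π ⟨2*n-2, by omega⟩ : ℕ) := by
    have := hexc ⟨2*n-2, by omega⟩ (Or.inl (by exact (⟨n-1, by omega⟩ : ∃ r, 2*n-2 = r + r)))
    simpa using this
  -- Step 2 : a4 = 1, a2 = 2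
  have hne24 : (a2 : ℕ) ≠ (a4 : ℕ) := by
    intro h
    have : a2 = a4 := Fin.ext h
    rw [this] at hv2; omega
  have hnlt : ¬ ((a2 : ℕ) < (a4 : ℕ)) := by
    intro hlt
    exact hQ ⟨0, by omega⟩ a2 a4 ⟨2*n-2, by omega⟩
      (by simpa using ha2z) hlt (by simp; omega)
      (by omega) (by omega) (by simp; omega)
  have hstep2 : (a4 : ℕ) = 1 ∧ (a2 : ℕ) = 2 := by omega
  have h1v : (π ⟨1, by omega⟩ : ℕ) = 4 := by
    have h : a4 = ⟨1, by omega⟩ := Fin.ext hstep2.1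
    rw [← h]; exact hv4
  have h2v : (π ⟨2, by omega⟩ : ℕ) = 2 := by
    have h : a2 = ⟨2, by omega⟩ := Fin.ext hstep2.2
    rw [← h]; exact hv2
  -- Step 3 : a6 = 6
  have ha6ne1 : (a6 : ℕ) ≠ 1 := by
    intro h
    have : a6 = ⟨1, by omega⟩ := Fin.ext h
    rw [this] at hv6; omega
  have ha6ne2 : (a6 : ℕ) ≠ 2 := by
    intro h
    have : a6 = ⟨2, by omega⟩ := Fin.ext h
    rw [this] at hv6; omega
  have hp6 : (6 : ℕ) ≤ (π ⟨6, by omega⟩ : ℕ) := by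
    have := hexc ⟨6, by omega⟩ (Or.inl (by simpa using (by decide : Even 6)))
    simpa using this
  have hstep3 : (a6 : ℕ) = 6 := by
    by_contra h
    have hlt6 : (a6 : ℕ) < 6 := by omega
    have hne6 : (π ⟨6, by omega⟩ : ℕ) ≠ 6 := by
      intro he
      have h' := hinj ⟨6, by omega⟩ a6 (by omega)
      simp at h'; omega
    exact hQ ⟨0, by omega⟩ ⟨1, by omega⟩ a6 ⟨6, by omega⟩
      (by simp) (by simp; omega) (by simpa using hlt6)
      (by omega) (by omega) (by omega)
  have h6v : (π ⟨6, by omega⟩ : ℕ) = 6 := by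
    have h : a6 = ⟨6, by omega⟩ := Fin.ext hstep3
    rw [← h]; exact hv6
  by_cases hn5 : 5 ≤ n
  · -- n ≥ 5 : also π 8 = 8, then 0 < 2 < 6 < 8 is a 1234
    have h8lt : (8:ℕ) < 2*n := by omega
    obtain ⟨a8, hv8⟩ := hpre 8 h8lt
    have hb8 : (a8 : ℕ) ≤ 8 := by
      have := hexc a8 (Or.inr (by rw [hv8]; decide)); omega
    have ha8z : 0 < (a8 : ℕ) := hz a8 (by omega)
    have ha8ne1 : (a8 : ℕ) ≠ 1 := by
      intro h
      have : a8 = ⟨1, by omega⟩ := Fin.ext h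
      rw [this] at hv8; omega
    have hp8 : (8 : ℕ) ≤ (π ⟨8, h8lt⟩ : ℕ) := by
      have := hexc ⟨8, h8lt⟩ (Or.inl (by simpa using (by decide : Even 8)))
      simpa using this
    have hstep4 : (a8 : ℕ) = 8 := by
      by_contra h
      have hlt8 : (a8 : ℕ) < 8 := by omega
      have hne8 : (π ⟨8, h8lt⟩ : ℕ) ≠ 8 := by
        intro he
        have h' := hinj ⟨8, h8lt⟩ a8 (by omega)
        simp at h'; omega
      exact hQ ⟨0, by omega⟩ ⟨1, by omega⟩ a8 ⟨8, h8lt⟩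
        (by simp) (by simp; omega) (by simpa using hlt8)
        (by omega) (by omega) (by omega)
    have h8v : (π ⟨8, h8lt⟩ : ℕ) = 8 := by
      have h : a8 = ⟨8, h8lt⟩ := Fin.ext hstep4
      rw [← h]; exact hv8
    exact hQ ⟨0, by omega⟩ ⟨2, by omega⟩ ⟨6, by omega⟩ ⟨8, h8lt⟩
      (by simp) (by simp) (by simp) (by omega) (by omega) (by omega)
  · -- n = 4
    have hp4 : (4 : ℕ) ≤ (π ⟨4, by omega⟩ : ℕ) := by
      have := hexc ⟨4, by omega⟩ (Or.inl (by simpa using (by decide : Even 4)))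
      simpa using this
    have hp4lt : (π ⟨4, by omega⟩ : ℕ) < 2*n := (π ⟨4, by omega⟩).isLt
    have hp4ne4 : (π ⟨4, by omega⟩ : ℕ) ≠ 4 := by
      intro h
      have h' := hinj ⟨4, by omega⟩ ⟨1, by omega⟩ (by omega)
      simp at h'
    have hp4ne6 : (π ⟨4, by omega⟩ : ℕ) ≠ 6 := by
      intro h
      have h' := hinj ⟨4, by omega⟩ ⟨6, by omega⟩ (by omega)
      simp at h'
    have hp4cases : (π ⟨4, by omega⟩ : ℕ) = 5 ∨ (π ⟨4, by omega⟩ : ℕ) = 7 := by omega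
    rcases hp4cases with h5 | h7
    · exact hQ ⟨0, by omega⟩ ⟨1, by omega⟩ ⟨4, by omega⟩ ⟨6, by omega⟩
        (by simp) (by simp) (by simp) (by omega) (by omega) (by omega)
    · have hrange : ∀ (k : ℕ) (hk : k < 2*n), k = 3 ∨ k = 5 →
          (π ⟨k, hk⟩ : ℕ) = 1 ∨ (π ⟨k, hk⟩ : ℕ) = 3 ∨ (π ⟨k, hk⟩ : ℕ) = 5 := by
        intro k hk hk35
        have hlt : (π ⟨k, hk⟩ : ℕ) < 2*n := (π ⟨k, hk⟩).isLt
        have hne0 : (π ⟨k, hk⟩ : ℕ) ≠ 0 := by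
          intro h
          have h' := hinj ⟨k, hk⟩ ⟨0, by omega⟩ (by omega)
          simp at h'; omega
        have hne4 : (π ⟨k, hk⟩ : ℕ) ≠ 4 := by
          intro h
          have h' := hinj ⟨k, hk⟩ ⟨1, by omega⟩ (by omega)
          simp at h'; omega
        have hne2 : (π ⟨k, hk⟩ : ℕ) ≠ 2 := by
          intro h
          have h' := hinj ⟨k, hk⟩ ⟨2, by omega⟩ (by omega)
          simp at h'; omega
        have hne6 : (π ⟨k, hk⟩ : ℕ) ≠ 6 := by
          intro h
          have h' := hinj ⟨k, hk⟩ ⟨6, by omega⟩ (by omega)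
          simp at h'; omega
        have hne7 : (π ⟨k, hk⟩ : ℕ) ≠ 7 := by
          intro h
          have h' := hinj ⟨k, hk⟩ ⟨4, by omega⟩ (by omega)
          simp at h'; omega
        omega
      have h3r := hrange 3 (by omega) (Or.inl rfl)
      have h5r := hrange 5 (by omega) (Or.inr rfl)
      by_cases h31 : (π ⟨3, by omega⟩ : ℕ) = 1
      · have h5ne1 : (π ⟨5, by omega⟩ : ℕ) ≠ 1 := by
          intro h
          have h' := hinj ⟨5, by omega⟩ ⟨3, by omega⟩ (by omega)
          simp at h'
        exact hQ ⟨0, by omega⟩ ⟨2, by omega⟩ ⟨5, by omega⟩ ⟨6, by omega⟩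
          (by simp) (by simp) (by simp) (by omega) (by omega) (by omega)
      · exact hQ ⟨0, by omega⟩ ⟨2, by omega⟩ ⟨3, by omega⟩ ⟨6, by omega⟩
          (by simp) (by simp) (by simp) (by omega) (by omega) (by omega)
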